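/- arXiv:2308.09347 — 5 statements merged into one kernel-verified Lean document; each statement's English description precedes it below -/
import Mathlib

section
/- Let n, m be positive integers with n > 2m, and let A, B, C, D be nonzero real numbers. If the polynomial P(x) = A x^n + B x^{n-m} + C x^m + D has a double positive real root (i.e., there exists α > 0 with P(α) = 0 and P'(α) = 0), then AD - BC ≥ 0. -/
theorem stmt_0 (n m : ℕ) (hm : 0 < m) (hnm : 2 * m < n)
    (A B C D : ℝ) (hA : A ≠ 0) (hB : B ≠ 0) (hC : C ≠ 0) (hD : D ≠ 0)
    (P : ℝ → ℝ) (hP : P = fun x => A * x ^ n + B * x ^ (n - m) + C * x ^ m + D)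
    (α : ℝ) (hα : 0 < α) (h0 : P α = 0) (h1 : deriv P α = 0) :
    A * D - B * C ≥ 0 := by
  have hmn : m ≤ n := by omega
  have hmn' : m < n - m := by omega
  have hd : HasDerivAt P (A * (↑n * α ^ (n - 1)) + B * (↑(n - m) * α ^ (n - m - 1))
      + C * (↑m * α ^ (m - 1))) α := by
    rw [hP]
    exact ((((hasDerivAt_pow n α).const_mul A).add
      ((hasDerivAt_pow (n - m) α).const_mul B)).add
      ((hasDerivAt_pow m α).const_mul C)).add_const D
  have e2' : A * (↑n * α ^ (n - 1)) + B * (↑(n - m) * α ^ (n - m - 1))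
      + C * (↑m * α ^ (m - 1)) = 0 := by rw [← hd.deriv, h1]
  have hαne : α ≠ 0 := ne_of_gt hα
  have hp1 : α ^ (n - 1) * α = α ^ n := by
    rw [← pow_succ]; congr 1; omega
  have hp2 : α ^ (n - m - 1) * α = α ^ (n - m) := by
    rw [← pow_succ]; congr 1; omega
  have hp3 : α ^ (m - 1) * α = α ^ m := by
    rw [← pow_succ]; congr 1; omega
  have hpow : α ^ (n - m) * α ^ m = α ^ n := by
    rw [← pow_add]; congr 1; omega
  set a := A * α ^ n with ha
  set b := B * α ^ (n - m) with hb
  set c := C * α ^ m with hc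
  have e1 : a + b + c + D = 0 := by
    rw [hP] at h0; simpa [ha, hb, hc] using h0
  have e2 : (n : ℝ) * a + ((n : ℝ) - (m : ℝ)) * b + (m : ℝ) * c = 0 := by
    have := congrArg (· * α) e2'
    simp only [add_mul, mul_assoc] at this
    rw [hp1, hp2, hp3] at this
    rw [ha, hb, hc]
    push_cast [Nat.cast_sub hmn] at this ⊢
    linarith [this]
  have key : (n : ℝ) ^ 2 * (a * D - b * c) = (m : ℝ) * ((n : ℝ) - m) * (b - c) ^ 2 := by
    linear_combination ((n : ℝ) ^ 2 * a) * e1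
      + (-((n : ℝ) * a) - (m : ℝ) * b - ((n : ℝ) - m) * c) * e2
  have hbc : b * c = B * C * α ^ n := by
    rw [hb, hc]; rw [mul_mul_mul_comm, hpow]
  have key2 : (n : ℝ) ^ 2 * ((A * D - B * C) * α ^ n) = (m : ℝ) * ((n : ℝ) - m) * (b - c) ^ 2 := by
    rw [← key, ha, hbc]; ring
  have hNpos : (0 : ℝ) < n := by exact_mod_cast (by omega : 0 < n)
  have hMpos : (0 : ℝ) < m := by exact_mod_cast hm
  have hNM : (0 : ℝ) < (n : ℝ) - m := by
    have : (m : ℝ) < n := by exact_mod_cast (by omega : m < n)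
    linarith
  have hαn : (0 : ℝ) < α ^ n := pow_pos hα n
  nlinarith [key2, mul_nonneg (mul_pos hMpos hNM).le (sq_nonneg (b - c)),
    mul_pos (mul_pos hNpos hNpos) hαn]
end

section
/- Let n, m be positive integers with n > 2m, let A, B, C, D be nonzero reals, and suppose α > 0 satisfies P(α) = P'(α) = 0 for P(x) = A x^n + B x^{n-m} + C x^m + D. Then m α^{m-1} (AD - BC) = (n-m) α^{n-m-1} (α^m A + B)^2, and in particular AD - BC = ((n-m)/m) α^{n-2m} (α^m A + B)^2. -/
theorem stmt_1 (n m : ℕ) (hm : 0 < m) (hnm : 2 * m < n)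
    (A B C D : ℝ) (hA : A ≠ 0) (hB : B ≠ 0) (hC : C ≠ 0) (hD : D ≠ 0)
    (P : ℝ → ℝ) (hP : P = fun x => A * x ^ n + B * x ^ (n - m) + C * x ^ m + D)
    (α : ℝ) (hα : 0 < α) (h0 : P α = 0) (h1 : deriv P α = 0) :
    (m : ℝ) * α ^ (m - 1) * (A * D - B * C)
      = ((n : ℝ) - m) * α ^ (n - m - 1) * (α ^ m * A + B) ^ 2 ∧
    A * D - B * C = (((n : ℝ) - m) / m) * α ^ (n - 2 * m) * (α ^ m * A + B) ^ 2 := by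
  subst hP
  obtain ⟨b, rfl⟩ : ∃ b, m = b + 1 := ⟨m - 1, by omega⟩
  obtain ⟨a, rfl⟩ : ∃ a, n = 2 * (b + 1) + (a + 1) := ⟨n - 2 * (b + 1) - 1, by omega⟩
  have e1 : 2 * (b + 1) + (a + 1) - (b + 1) = b + a + 2 := by omega
  have e2 : 2 * (b + 1) + (a + 1) - (b + 1) - 1 = b + a + 1 := by omega
  have e3 : (b + 1) - 1 = b := by omega
  have e4 : 2 * (b + 1) + (a + 1) - 2 * (b + 1) = a + 1 := by omega
  have e5 : 2 * (b + 1) + (a + 1) - 1 = 2 * b + a + 2 := by omega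
  have e2' : b + a + 2 - 1 = b + a + 1 := by omega
  rw [e1] at h0 h1 ⊢
  rw [e2', e3, e4]
  have e5' : 2 * (b + 1) + (a + 1) - 1 = 2 * b + a + 2 := by omega
  have h1d := (hasDerivAt_pow (2 * (b + 1) + (a + 1)) α).const_mul A
  have h2d := (hasDerivAt_pow (b + a + 2) α).const_mul B
  have h3d := (hasDerivAt_pow (b + 1) α).const_mul C
  rw [e5'] at h1d
  rw [e2'] at h2d
  rw [e3] at h3d
  have hder := ((h1d.add h2d).add h3d).add_const D
  have h1' := hder.deriv ▸ h1
  push_cast at h0 h1' ⊢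
  have hα0 : α ≠ 0 := hα.ne'
  have hb0 : α ^ b ≠ 0 := pow_ne_zero b hα0
  have h1'' : α ^ b * (A * (2 * (b:ℝ) + a + 3) * α ^ (b + a + 2) +
      B * ((b:ℝ) + a + 2) * α ^ (a + 1) + C * ((b:ℝ) + 1)) = 0 := by
    rw [← h1']; push_cast; ring
  have h1c : A * (2 * (b:ℝ) + a + 3) * α ^ (b + a + 2) +
      B * ((b:ℝ) + a + 2) * α ^ (a + 1) + C * ((b:ℝ) + 1) = 0 :=
    (mul_eq_zero.mp h1'').resolve_left hb0
  have key : ((b:ℝ) + 1) * (A * D - B * C)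
      = (((2:ℝ) * b + a + 3) - (b + 1)) * α ^ (a + 1) * (α ^ (b + 1) * A + B) ^ 2 := by
    linear_combination (((b:ℝ) + 1) * A) * h0 - (α ^ (b + 1) * A + B) * h1c
  constructor
  · linear_combination (α ^ b) * key
  · have hm0 : ((b:ℝ) + 1) ≠ 0 := by positivity
    rw [div_mul_eq_mul_div, div_mul_eq_mul_div, eq_div_iff hm0]
    linear_combination key
end

section
/- Let n, m be positive integers with n > 2m, and let A < 0, B > 0, C < 0, D > 0 be real numbers satisfying AD - BC < 0. Then the polynomial P(x) = A x^n + B x^{n-m} + C x^m + D has no positive real root α with P(α) = 0 and P'(α) = 0 simultaneously. -/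
set_option maxHeartbeats 1000000


theorem stmt_3 (n m : ℕ) (hm : 0 < m) (hnm : 2 * m < n)
    (A B C D : ℝ) (hA : A < 0) (hB : 0 < B) (hC : C < 0) (hD : 0 < D)
    (hdet : A * D - B * C < 0)
    (P : ℝ → ℝ) (hP : P = fun x => A * x ^ n + B * x ^ (n - m) + C * x ^ m + D) :
    ¬ ∃ α : ℝ, 0 < α ∧ P α = 0 ∧ deriv P α = 0 := by
  subst hP
  rintro ⟨α, hα, hPα, hP'α⟩
  have hmn : m < n := by omega
  have hd : HasDerivAt (fun x : ℝ => A * x ^ n + B * x ^ (n - m) + C * x ^ m + D)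
      (A * (↑n * α ^ (n - 1)) + B * (↑(n - m) * α ^ (n - m - 1)) + C * (↑m * α ^ (m - 1))) α :=
    ((((hasDerivAt_pow n α).const_mul A).add ((hasDerivAt_pow (n - m) α).const_mul B)).add
      ((hasDerivAt_pow m α).const_mul C)).add_const D
  have hd0 : A * (↑n * α ^ (n - 1)) + B * (↑(n - m) * α ^ (n - m - 1)) + C * (↑m * α ^ (m - 1))
      = 0 := by rw [← hd.deriv]; exact hP'α
  have hpow : ∀ k : ℕ, 1 ≤ k → α ^ (k - 1) * α = α ^ k := by
    intro k hk
    rw [← pow_succ, Nat.sub_add_cancel hk]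
  have hmul : (A * (↑n * α ^ (n - 1)) + B * (↑(n - m) * α ^ (n - m - 1))
      + C * (↑m * α ^ (m - 1))) * α = 0 := by rw [hd0]; ring
  have hcast : ((n - m : ℕ) : ℝ) = (n : ℝ) - (m : ℝ) := by
    exact_mod_cast Nat.cast_sub hmn.le
  have E2 : (n : ℝ) * A * α ^ n + ((n : ℝ) - m) * B * α ^ (n - m) + (m : ℝ) * C * α ^ m = 0 := by
    rw [← hpow n (by omega), ← hpow (n - m) (by omega), ← hpow m (by omega)]
    rw [← hmul, hcast]; ring
  set s := α ^ (n - m) with hs_def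
  set t := α ^ m with ht_def
  have hst : α ^ n = s * t := by
    rw [hs_def, ht_def, ← pow_add, Nat.sub_add_cancel hmn.le]
  have hs : 0 < s := pow_pos hα _
  have ht : 0 < t := pow_pos hα _
  have E1 : A * (s * t) + B * s + C * t + D = 0 := by rw [← hst]; exact hPα
  have E2' : (n : ℝ) * A * (s * t) + ((n : ℝ) - m) * B * s + (m : ℝ) * C * t = 0 := by
    rw [← hst]; exact E2
  have hM : (0 : ℝ) < (m : ℝ) := by exact_mod_cast hm
  have hN : (0 : ℝ) < (n : ℝ) := by
    have : 0 < n := by omega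
    exact_mod_cast this
  have h2m : 2 * (m : ℝ) < (n : ℝ) := by exact_mod_cast hnm
  -- eliminate t
  have key : t * ((m : ℝ) * A * B * s ^ 2
      + ((n : ℝ) * A * D - ((n : ℝ) - 2 * m) * B * C) * s + (m : ℝ) * C * D) = 0 := by
    linear_combination (B * s + D) * E2' - ((n : ℝ) - (m : ℝ)) * B * s * E1
  have key2 : (m : ℝ) * A * B * s ^ 2
      + ((n : ℝ) * A * D - ((n : ℝ) - 2 * m) * B * C) * s + (m : ℝ) * C * D = 0 := by
    rcases mul_eq_zero.mp key with h | h
    · exact absurd h ht.ne'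
    · exact h
  have hAD : A * D < B * C := by linarith
  have hBC : B * C < 0 := mul_neg_of_pos_of_neg hB hC
  have hNAD : (n : ℝ) * (A * D) < (n : ℝ) * (B * C) := mul_lt_mul_of_pos_left hAD hN
  have hMBC : (m : ℝ) * (B * C) < 0 := mul_neg_of_pos_of_neg hM hBC
  have hcoeff : (n : ℝ) * A * D - ((n : ℝ) - 2 * m) * B * C < 0 := by nlinarith
  have t1 : (m : ℝ) * (A * B) * (s * s) < 0 :=
    mul_neg_of_neg_of_pos (mul_neg_of_pos_of_neg hM (mul_neg_of_neg_of_pos hA hB))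
      (mul_pos hs hs)
  have t2 : ((n : ℝ) * A * D - ((n : ℝ) - 2 * m) * B * C) * s < 0 :=
    mul_neg_of_neg_of_pos hcoeff hs
  have t3 : (m : ℝ) * (C * D) < 0 := mul_neg_of_pos_of_neg hM (mul_neg_of_neg_of_pos hC hD)
  nlinarith [key2, t1, t2, t3]
end

section
/- Let e₁, e₂, f₁, f₂ ≥ 0 and 0 < σ₁ < σ₂. Then (e₁ + e₂ + f₁ + f₂)σ₁σ₂ - (e₁ + f₂)σ₁² - (e₂ + f₁)σ₂² < (σ₂/σ₁)² (e₂ + f₁) (σ₁ - σ₂)², provided e₂ + f₁ > 0. -/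
theorem stmt_7 (e₁ e₂ f₁ f₂ σ₁ σ₂ : ℝ)
    (he₁ : 0 ≤ e₁) (he : e₁ ≤ e₂) (hf₂ : 0 ≤ f₂) (hf : f₂ ≤ f₁)
    (hσ₁ : 0 < σ₁) (hσ : σ₁ < σ₂) (hef : 0 < e₂ + f₁) :
    (e₁ + e₂ + f₁ + f₂) * σ₁ * σ₂ - (e₁ + f₂) * σ₁ ^ 2 - (e₂ + f₁) * σ₂ ^ 2
      < (σ₂ / σ₁) ^ 2 * (e₂ + f₁) * (σ₁ - σ₂) ^ 2 := by
  have hL : (e₁ + e₂ + f₁ + f₂) * σ₁ * σ₂ - (e₁ + f₂) * σ₁ ^ 2 - (e₂ + f₁) * σ₂ ^ 2 < 0 := by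
    nlinarith [mul_pos hef (mul_pos hσ₁ (sub_pos.2 hσ)), mul_nonneg (by linarith : (0:ℝ) ≤ e₂ + f₁ - (e₁ + f₂)) (mul_pos hσ₁ (sub_pos.2 hσ)).le]
  have hR : 0 < (σ₂ / σ₁) ^ 2 * (e₂ + f₁) * (σ₁ - σ₂) ^ 2 := by
    have h1 : σ₁ - σ₂ ≠ 0 := by linarith
    have h2 : σ₂ / σ₁ ≠ 0 := div_ne_zero (by linarith) hσ₁.ne'
    positivity
  linarith
end

section
/- Let n > 2m > 0 be integers and let A < 0, B > 0, C < 0, D > 0 be reals with AD - BC < 0. Then the polynomial P(x) = A x^n + B x^{n-m} + C x^m + D has exactly one positive real root. -/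
theorem stmt_9 (n m : ℕ) (hm : 0 < m) (hnm : 2 * m < n)
    (A B C D : ℝ) (hA : A < 0) (hB : 0 < B) (hC : C < 0) (hD : 0 < D)
    (hdet : A * D - B * C < 0)
    (P : ℝ → ℝ) (hP : P = fun x => A * x ^ n + B * x ^ (n - m) + C * x ^ m + D) :
    ∃! α : ℝ, 0 < α ∧ P α = 0 := by
  have hmn : m ≤ n := by omega
  have hm0 : m ≠ 0 := by omega
  have hn0 : n ≠ 0 := by omega
  have hsplit : ∀ x : ℝ, x ^ n = x ^ (n - m) * x ^ m := by
    intro x; rw [← pow_add]; congr 1; omega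
  -- key: at a positive root, A * α ^ m + B < 0
  have key : ∀ α : ℝ, 0 < α → P α = 0 → A * α ^ m + B < 0 := by
    intro α hα hroot
    rw [hP] at hroot
    simp only at hroot
    have hαn : (0:ℝ) < α ^ n := pow_pos hα n
    have hαnm : (0:ℝ) < α ^ (n - m) := pow_pos hα _
    have hαm : (0:ℝ) < α ^ m := pow_pos hα m
    have hprod : (-A * α ^ n) * D - (B * α ^ (n - m)) * (-C * α ^ m) > 0 := by
      have h1 : (B * α ^ (n - m)) * (-C * α ^ m) = -(B * C) * α ^ n := by
        rw [hsplit α]; ring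
      have h2 : (-A * α ^ n) * D = -(A * D) * α ^ n := by ring
      rw [h1, h2]
      nlinarith
    -- P1 > P2
    have h12 : B * α ^ (n - m) < -A * α ^ n := by
      by_contra h
      push_neg at h
      -- then P3 ≥ P4 from the sum, so P1 * P4 ≤ P2 * P3
      have hsum : (-A * α ^ n) + (-C * α ^ m) = B * α ^ (n - m) + D := by linarith
      nlinarith [mul_pos hB hαnm, mul_pos (neg_pos.mpr hC) hαm]
    -- divide by α ^ (n - m) > 0
    nlinarith [hsplit α, mul_pos hαnm hαm]
  -- decreasing: past a positive root, P is negative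
  have dec : ∀ α x : ℝ, 0 < α → P α = 0 → α < x → P x < 0 := by
    intro α x hα hroot hαx
    have hk := key α hα hroot
    rw [hP] at hroot ⊢
    simp only at hroot ⊢
    have hx : 0 < x := hα.trans hαx
    have hαm : α ^ m < x ^ m := pow_lt_pow_left₀ hαx hα.le hm0
    have hαnm : α ^ (n - m) < x ^ (n - m) := pow_lt_pow_left₀ hαx hα.le (by omega)
    have hαnm0 : (0:ℝ) < α ^ (n - m) := pow_pos hα _
    have hkx : A * x ^ m + B < A * α ^ m + B := by nlinarith
    have h1 : (A * x ^ m + B) * x ^ (n - m) < (A * α ^ m + B) * α ^ (n - m) := by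
      calc (A * x ^ m + B) * x ^ (n - m) < (A * x ^ m + B) * α ^ (n - m) := by
            apply mul_lt_mul_of_neg_left hαnm
            linarith
        _ < (A * α ^ m + B) * α ^ (n - m) := by
            apply mul_lt_mul_of_pos_right hkx hαnm0
    have h2 : C * x ^ m + D < C * α ^ m + D := by nlinarith
    have e1 : A * x ^ n + B * x ^ (n - m) = (A * x ^ m + B) * x ^ (n - m) := by
      rw [hsplit x]; ring
    have e2 : A * α ^ n + B * α ^ (n - m) = (A * α ^ m + B) * α ^ (n - m) := by
      rw [hsplit α]; ring
    nlinarith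
  -- existence
  obtain ⟨α, hα, hαroot⟩ : ∃ α : ℝ, 0 < α ∧ P α = 0 := by
    set x₀ : ℝ := max 1 ((B + D + 1) / (-A)) with hx₀def
    have hx1 : (1:ℝ) ≤ x₀ := le_max_left _ _
    have hx0 : (0:ℝ) < x₀ := by linarith
    have hx2 : (B + D + 1) / (-A) ≤ x₀ := le_max_right _ _
    have hAx : B + D + 1 ≤ x₀ * (-A) := by
      rwa [div_le_iff₀ (by linarith)] at hx2
    have hPneg : P x₀ < 0 := by
      rw [hP]; simp only
      have h1 : x₀ ^ (n - m) ≤ x₀ ^ (n - 1) := pow_le_pow_right₀ hx1 (by omega)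
      have h2 : (1:ℝ) ≤ x₀ ^ (n - 1) := one_le_pow₀ hx1
      have h3 : x₀ ^ n = x₀ * x₀ ^ (n - 1) := by
        rw [← pow_succ']; congr 1; omega
      have hCx : C * x₀ ^ m < 0 := mul_neg_of_neg_of_pos hC (pow_pos hx0 m)
      have : A * x₀ ^ n + B * x₀ ^ (n - m) + D ≤ (A * x₀ + B + D) * x₀ ^ (n - 1) := by
        rw [h3]
        have hB1 : B * x₀ ^ (n - m) ≤ B * x₀ ^ (n - 1) := by nlinarith
        have hD1 : D ≤ D * x₀ ^ (n - 1) := by nlinarith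
        nlinarith
      have hneg : A * x₀ + B + D ≤ -1 := by nlinarith
      nlinarith
    have hcont : Continuous P := by rw [hP]; fun_prop
    have hP0 : P 0 = D := by
      rw [hP]; simp [zero_pow hn0, zero_pow hm0, zero_pow (show n - m ≠ 0 by omega)]
    have := intermediate_value_Icc' hx0.le hcont.continuousOn
    have h0mem : (0:ℝ) ∈ Set.Icc (P x₀) (P 0) := by
      refine ⟨by linarith, by rw [hP0]; linarith⟩
    obtain ⟨α, hαmem, hαroot⟩ := this h0mem
    refine ⟨α, ?_, hαroot⟩
    rcases lt_or_eq_of_le hαmem.1 with h | h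
    · exact h
    · exfalso; rw [← h] at hαroot; rw [hP0] at hαroot; linarith
  refine ⟨α, ⟨hα, hαroot⟩, ?_⟩
  rintro y ⟨hy, hyroot⟩
  rcases lt_trichotomy y α with h | h | h
  · exact absurd hαroot (by have := dec y α hy hyroot h; linarith)
  · exact h
  · exact absurd hyroot (by have := dec α y hα hαroot h; linarith)
end
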